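/- arXiv:2406.04850 — 2 statements merged into one kernel-verified Lean document; each statement's English description precedes it below -/
import Mathlib

section
/- Let γ₁, γ₂, γ₃ be independent standard real Gaussian random variables and let a > 1. Then E[(γ₁² + γ₂² + (1/a²)γ₃²)/(γ₁² + γ₂² + (1/a)γ₃²)] = 1 + (1/a) − (1/a)·(1/(2√(1−1/a)))·log((1+√(1−1/a))/(1−√(1−1/a))). -/
open MeasureTheory ProbabilityTheory Real Set Filter Topology
open scoped ENNReal NNReal

lemma exp_Ioi (s : ℝ) (hs : 0 < s) : ∫ t in Ioi (0:ℝ), Real.exp (-(s*t)) = s⁻¹ := by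
  have h := integral_Ioi_of_hasDerivAt_of_tendsto (f := fun t => -s⁻¹ * Real.exp (-(s*t)))
    (f' := fun t => Real.exp (-(s*t))) (a := 0) (m := 0) ?_ ?_ ?_ ?_
  · simpa using h
  · exact (Continuous.continuousWithinAt (by continuity))
  · intro x hx
    have : HasDerivAt (fun t : ℝ => -(s*t)) (-s) x := by
      simpa using ((hasDerivAt_id x).const_mul (-s))
    have := (this.exp).const_mul (-s⁻¹)
    refine this.congr_deriv (Eq.symm ?_)
    field_simp
  · have : IntegrableOn (fun t : ℝ => Real.exp (-s * t)) (Ioi 0) := exp_neg_integrableOn_Ioi 0 hs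
    simpa [neg_mul] using this
  · have h1 : Tendsto (fun t : ℝ => s * t) atTop atTop :=
      Tendsto.const_mul_atTop hs tendsto_id
    have h2 : Tendsto (fun t : ℝ => Real.exp (-(s*t))) atTop (𝓝 0) :=
      Real.tendsto_exp_neg_atTop_nhds_zero.comp h1
    simpa using h2.const_mul (-s⁻¹)

lemma sq_exp_int (c : ℝ) (hc : 0 < c) :
    ∫ x : ℝ, x^2 * Real.exp (-c * x^2) = Real.sqrt (π / c) / (2*c) := by
  have hu : ∀ x : ℝ, HasDerivAt (fun x : ℝ => x) 1 x := fun x => hasDerivAt_id x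
  have hv : ∀ x : ℝ, HasDerivAt (fun x : ℝ => -(2*c)⁻¹ * Real.exp (-c * x^2))
      (x * Real.exp (-c * x^2)) x := by
    intro x
    have h1 : HasDerivAt (fun x : ℝ => -c * x^2) (-c * (2*x)) x := by
      simpa using ((hasDerivAt_pow 2 x).const_mul (-c))
    have := (h1.exp).const_mul (-(2*c)⁻¹)
    refine this.congr_deriv (Eq.symm ?_)
    field_simp
  have hint2 : Integrable fun x : ℝ => x^2 * Real.exp (-c * x^2) := by
    apply Integrable.mono' ((integrable_exp_neg_mul_sq (by positivity : 0 < c/2)).const_mul (2/c))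
    · exact ((continuous_pow 2).mul (by continuity)).aestronglyMeasurable
    · filter_upwards with x
      have h1 : c/2 * x^2 ≤ Real.exp (c/2 * x^2) := by
        have := Real.add_one_le_exp (c/2 * x^2); nlinarith
      have h2 : x^2 ≤ 2/c * Real.exp (c/2 * x^2) := by
        rw [div_mul_eq_mul_div, le_div_iff₀ hc]
        nlinarith [h1]
      have h3 : (0:ℝ) < Real.exp (-c * x^2) := Real.exp_pos _
      rw [Real.norm_eq_abs, abs_of_nonneg (by positivity)]
      calc x^2 * Real.exp (-c*x^2) ≤ (2/c * Real.exp (c/2 * x^2)) * Real.exp (-c*x^2) := by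
            exact mul_le_mul_of_nonneg_right h2 h3.le
        _ = 2/c * Real.exp (-(c/2) * x^2) := by
            rw [mul_assoc, ← Real.exp_add]; ring_nf
  have huv' : Integrable ((fun x:ℝ => x) * fun x => x * Real.exp (-c * x^2)) := by
    have : ((fun x:ℝ => x) * fun x => x * Real.exp (-c * x^2))
        = fun x => x^2 * Real.exp (-c * x^2) := by funext x; simp [Pi.mul_apply]; ring
    rw [this]; exact hint2
  have hu'v : Integrable ((fun _:ℝ => (1:ℝ)) * fun x => -(2*c)⁻¹ * Real.exp (-c * x^2)) := by
    have : ((fun _:ℝ => (1:ℝ)) * fun x => -(2*c)⁻¹ * Real.exp (-c * x^2))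
        = fun x => -(2*c)⁻¹ * Real.exp (-c * x^2) := by funext x; simp [Pi.mul_apply]
    rw [this]; exact (integrable_exp_neg_mul_sq hc).const_mul _
  have huv : Integrable ((fun x:ℝ => x) * fun x => -(2*c)⁻¹ * Real.exp (-c * x^2)) := by
    have : ((fun x:ℝ => x) * fun x => -(2*c)⁻¹ * Real.exp (-c * x^2))
        = fun x => -(2*c)⁻¹ * (x * Real.exp (-c * x^2)) := by funext x; simp [Pi.mul_apply]; ring
    rw [this]; exact (integrable_mul_exp_neg_mul_sq hc).const_mul _
  have H := integral_mul_deriv_eq_deriv_mul_of_integrable (fun x _ => hu x) (fun x _ => hv x) huv' hu'v huv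
  have e1 : ∫ x : ℝ, x * (x * Real.exp (-c * x^2)) = ∫ x : ℝ, x^2 * Real.exp (-c * x^2) := by
    congr 1; funext x; ring
  rw [e1] at H
  rw [H]
  have e2 : ∫ x : ℝ, (1:ℝ) * (-(2*c)⁻¹ * Real.exp (-c * x^2))
      = -(2*c)⁻¹ * ∫ x : ℝ, Real.exp (-c * x^2) := by
    simp_rw [one_mul]; exact integral_const_mul _ _
  rw [e2, integral_gaussian]
  ring

lemma gauss_eq (g : ℝ → ℝ) :
    ∫ x, g x ∂(gaussianReal 0 1) = ∫ x, ((Real.sqrt (2*π))⁻¹ * Real.exp (-x^2/2)) * g x := by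
  rw [gaussianReal_of_var_ne_zero 0 one_ne_zero]
  have : gaussianPDF 0 1 = fun x => ((gaussianPDFReal 0 1 x).toNNReal : ℝ≥0∞) := rfl
  rw [this, integral_withDensity_eq_integral_smul
    ((measurable_gaussianPDFReal 0 1).real_toNNReal) g]
  congr 1
  funext x
  rw [NNReal.smul_def, Real.coe_toNNReal _ (gaussianPDFReal_nonneg 0 1 x)]
  rw [smul_eq_mul]
  simp only [gaussianPDFReal, NNReal.coe_one, mul_one, sub_zero]

lemma sqrt_aux (c : ℝ) (hc : 0 < c) :
    (Real.sqrt (2*π))⁻¹ * Real.sqrt (π/(c+1/2)) = (Real.sqrt (1+2*c))⁻¹ := by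
  rw [← Real.sqrt_inv, ← Real.sqrt_mul (by positivity), ← Real.sqrt_inv]
  congr 1
  have hπ := Real.pi_pos
  field_simp
  ring

lemma gauss1 (c : ℝ) (hc : 0 < c) :
    ∫ x, Real.exp (-c * x^2) ∂(gaussianReal 0 1) = (Real.sqrt (1+2*c))⁻¹ := by
  rw [gauss_eq]
  have e1 : ∀ x : ℝ, ((Real.sqrt (2*π))⁻¹ * Real.exp (-x^2/2)) * Real.exp (-c * x^2)
      = (Real.sqrt (2*π))⁻¹ * Real.exp (-(c+1/2) * x^2) := by
    intro x; rw [mul_assoc, ← Real.exp_add]; ring_nf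
  simp_rw [e1]
  rw [integral_const_mul, integral_gaussian]
  exact sqrt_aux c hc

lemma gauss2 (c : ℝ) (hc : 0 < c) :
    ∫ x, x^2 * Real.exp (-c * x^2) ∂(gaussianReal 0 1)
      = ((1+2*c) * Real.sqrt (1+2*c))⁻¹ := by
  rw [gauss_eq]
  have e1 : ∀ x : ℝ, ((Real.sqrt (2*π))⁻¹ * Real.exp (-x^2/2)) * (x^2 * Real.exp (-c * x^2))
      = (Real.sqrt (2*π))⁻¹ * (x^2 * Real.exp (-(c+1/2) * x^2)) := by
    intro x
    rw [mul_comm (x^2) (Real.exp (-(c+1/2) * x^2)), mul_assoc, ← mul_assoc (Real.exp (-x^2/2)),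
      mul_comm (Real.exp (-x^2/2)), mul_assoc, ← Real.exp_add]
    ring_nf
  simp_rw [e1]
  rw [integral_const_mul, sq_exp_int (c+1/2) (by positivity)]
  rw [show (2*(c+1/2) : ℝ) = 1+2*c by ring, ← mul_div_assoc, sqrt_aux c hc, mul_inv]
  rw [div_eq_mul_inv, mul_comm]
theorem integral_pi_gen : ∀ {n : ℕ} (μ : Fin n → Measure ℝ), (∀ i, SigmaFinite (μ i)) →
    ∀ f : Fin n → ℝ → ℝ,
    ∫ x : Fin n → ℝ, ∏ i, f i (x i) ∂(Measure.pi μ) = ∏ i, ∫ x, f i x ∂(μ i) := by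
  intro n
  induction n with
  | zero =>
      intro μ _ f
      simp only [Finset.univ_eq_empty, Finset.prod_empty, integral_const]
      rw [Measure.pi_of_empty]
      simp
  | succ n ih =>
      intro μ hσ f
      have : ∀ i, SigmaFinite (μ i) := hσ
      calc
        ∫ x : Fin (n+1) → ℝ, ∏ i, f i (x i) ∂(Measure.pi μ)
            = ∫ p : ℝ × (Fin n → ℝ), f 0 p.1 * ∏ i : Fin n, f (Fin.succ i) (p.2 i)
              ∂((μ 0).prod (Measure.pi fun j => μ (Fin.succ j))) := by
          rw [← ((measurePreserving_piFinSuccAbove μ 0).symm).integral_comp']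
          congr 1
          funext p
          rw [Fin.prod_univ_succ]
          simp [MeasurableEquiv.piFinSuccAbove_symm_apply, Fin.insertNthEquiv,
            Fin.insertNth_zero, Fin.zero_succAbove]
        _ = (∫ x, f 0 x ∂(μ 0)) * ∏ i : Fin n, ∫ x, f (Fin.succ i) x ∂(μ (Fin.succ i)) := by
          rw [← ih (fun j => μ (Fin.succ j)) (fun j => hσ _) (fun j => f (Fin.succ j)),
            ← integral_prod_mul]
        _ = ∏ i, ∫ x, f i x ∂(μ i) := by rw [Fin.prod_univ_succ]
lemma ftc_main {b k : ℝ} (hb : 0 < b) (hb1 : b < 1) (hk : k = Real.sqrt (1-b)) :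
    IntegrableOn (fun t : ℝ => (1+2*t)⁻¹ * ((1+2*b*t) * Real.sqrt (1+2*b*t))⁻¹) (Ioi 0)
    ∧ ∫ t in Ioi (0:ℝ), (1+2*t)⁻¹ * ((1+2*b*t) * Real.sqrt (1+2*b*t))⁻¹
      = (k^2)⁻¹ * ((2*k)⁻¹ * (Real.log (1+k) - Real.log (1-k)) - 1) := by
  have hkpos : 0 < k := by rw [hk]; exact Real.sqrt_pos.2 (by linarith)
  have hk2 : k^2 = 1 - b := by rw [hk]; exact Real.sq_sqrt (by linarith)
  have hk1 : k < 1 := by nlinarith [hk2]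
  set u : ℝ → ℝ := fun t => Real.sqrt (1+2*b*t) with hu
  set F : ℝ → ℝ := fun t =>
    (k^2)⁻¹ * ((u t)⁻¹ + (2*k)⁻¹ * (Real.log (u t - k) - Real.log (u t + k))) with hF
  set φ : ℝ → ℝ := fun t => (1+2*t)⁻¹ * ((1+2*b*t) * Real.sqrt (1+2*b*t))⁻¹ with hφ
  have hupos : ∀ t : ℝ, 0 ≤ t → 1 ≤ u t := by
    intro t ht
    have h : (1:ℝ) ≤ 1+2*b*t := by nlinarith
    calc (1:ℝ) = Real.sqrt 1 := by simp
      _ ≤ Real.sqrt (1+2*b*t) := Real.sqrt_le_sqrt h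
  have hderiv : ∀ t : ℝ, 0 ≤ t → HasDerivAt F (φ t) t := by
    intro t ht
    have h1t : (1:ℝ) ≤ u t := hupos t ht
    have hut : 0 < u t := lt_of_lt_of_le one_pos h1t
    have humk : 0 < u t - k := by linarith
    have hupk : 0 < u t + k := by linarith
    have hu2 : (u t)^2 = 1 + 2*b*t := Real.sq_sqrt (by nlinarith)
    have hinner : HasDerivAt (fun s : ℝ => 1+2*b*s) (2*b) t := by
      simpa using ((hasDerivAt_id t).const_mul (2*b)).const_add 1
    have hud : HasDerivAt u (b / u t) t := by
      have := (Real.hasDerivAt_sqrt (by nlinarith : (1:ℝ)+2*b*t ≠ 0)).comp t hinner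
      refine this.congr_deriv (Eq.symm ?_)
      rw [hu]
      field_simp
    have hinv : HasDerivAt (fun s => (u s)⁻¹) (-(b / u t) / (u t)^2) t := hud.inv (by positivity)
    have hlog1 : HasDerivAt (fun s => Real.log (u s - k)) ((b / u t) / (u t - k)) t := by
      simpa using ((hud.sub_const k).log humk.ne')
    have hlog2 : HasDerivAt (fun s => Real.log (u s + k)) ((b / u t) / (u t + k)) t := by
      simpa using ((hud.add_const k).log hupk.ne')
    have hsum := ((hinv.add (((hlog1.sub hlog2)).const_mul ((2*k)⁻¹))).const_mul ((k^2)⁻¹))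
    refine hsum.congr_deriv (Eq.symm ?_)
    rw [hφ]
    have h12t : (1:ℝ)+2*t = ((u t)^2 - k^2)/b := by
      rw [hu2, hk2]; field_simp; ring
    simp only []
    rw [h12t, ← hu2]
    have hb' : b ≠ 0 := hb.ne'
    have hu' : u t ≠ 0 := hut.ne'
    have humk' : u t - k ≠ 0 := humk.ne'
    have hupk' : u t + k ≠ 0 := hupk.ne'
    have hk' : k ≠ 0 := hkpos.ne'
    have husq : (0:ℝ) < u t^2 - k^2 := by nlinarith
    field_simp [husq.ne']
    rw [Real.sqrt_sq hut.le]
    ring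
  have hu_top : Tendsto u atTop atTop := by
    rw [hu]
    apply tendsto_atTop_atTop.2
    intro C
    refine ⟨max 0 ((C^2)/(2*b)), fun t ht => ?_⟩
    have h1 : (C^2)/(2*b) ≤ t := le_trans (le_max_right _ _) ht
    have h0 : 0 ≤ t := le_trans (le_max_left _ _) ht
    have h2 : C^2 ≤ 1 + 2*b*t := by rw [div_le_iff₀ (by positivity)] at h1; nlinarith
    calc C ≤ |C| := le_abs_self C
      _ = Real.sqrt (C^2) := (Real.sqrt_sq_eq_abs C).symm
      _ ≤ _ := Real.sqrt_le_sqrt h2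
  have hF_top : Tendsto F atTop (𝓝 0) := by
    have hinv0 : Tendsto (fun t => (u t)⁻¹) atTop (𝓝 0) :=
      tendsto_inv_atTop_zero.comp hu_top
    have hratio : Tendsto (fun t => (u t - k)/(u t + k)) atTop (𝓝 1) := by
      have h3 : Tendsto (fun v : ℝ => 2*k/(v+k)) atTop (𝓝 0) :=
        Filter.Tendsto.div_atTop tendsto_const_nhds
          (tendsto_atTop_add_const_right _ k tendsto_id)
      have h2 : Tendsto (fun v : ℝ => 1 - 2*k/(v+k)) atTop (𝓝 1) := by
        simpa using tendsto_const_nhds.sub h3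
      have h4 : Tendsto (fun v : ℝ => (v - k)/(v + k)) atTop (𝓝 1) := by
        apply h2.congr'
        filter_upwards [eventually_gt_atTop k] with v hv
        have hvk : v + k ≠ 0 := by nlinarith [hkpos]
        field_simp
        ring
      exact h4.comp hu_top
    have hlog : Tendsto (fun t => Real.log (u t - k) - Real.log (u t + k)) atTop (𝓝 0) := by
      have h5 : Tendsto (fun t => Real.log ((u t - k)/(u t + k))) atTop (𝓝 0) := by
        have := (Real.continuousAt_log one_ne_zero).tendsto.comp hratio
        simpa [Function.comp_def] using this
      apply h5.congr'
      filter_upwards [hu_top.eventually (eventually_ge_atTop (1:ℝ))] with t ht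
      have humk : 0 < u t - k := by linarith
      have hupk : 0 < u t + k := by linarith
      rw [Real.log_div humk.ne' hupk.ne']
    have hthis := (hinv0.add (hlog.const_mul ((2*k)⁻¹))).const_mul ((k^2)⁻¹)
    have h00 : (k^2)⁻¹ * (0 + (2*k)⁻¹ * 0) = (0:ℝ) := by ring
    rw [← h00]
    exact hthis
  have hcont : ContinuousWithinAt F (Ici 0) 0 :=
    (hderiv 0 le_rfl).continuousAt.continuousWithinAt
  have hderiv' : ∀ x ∈ Ioi (0:ℝ), HasDerivAt F (φ x) x := fun x hx => hderiv x (le_of_lt hx)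
  have hnonneg : ∀ x ∈ Ioi (0:ℝ), 0 ≤ φ x := by
    intro x hx
    have hx0 : (0:ℝ) < x := hx
    have h1 : (0:ℝ) < 1+2*x := by linarith
    have h2 : (0:ℝ) < 1+2*b*x := by nlinarith
    rw [hφ]
    positivity
  have hu0 : u 0 = 1 := by rw [hu]; norm_num
  have hF0 : F 0 = (k^2)⁻¹ * (1 + (2*k)⁻¹ * (Real.log (1-k) - Real.log (1+k))) := by
    rw [hF]
    simp only [hu0]
    ring_nf
  constructor
  · exact integrableOn_Ioi_deriv_of_nonneg hcont hderiv' hnonneg hF_top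
  · have key := integral_Ioi_of_hasDerivAt_of_nonneg hcont hderiv' hnonneg hF_top
    rw [key, hF0]
    ring

set_option maxHeartbeats 2000000 in
/-- For independent standard Gaussians γ₁,γ₂,γ₃ and `a > 1`,
`E[(γ₁²+γ₂²+(1/a²)γ₃²)/(γ₁²+γ₂²+(1/a)γ₃²)]
  = 1 + 1/a − (1/a)·(1/(2√(1−1/a)))·log((1+√(1−1/a))/(1−√(1−1/a)))`. -/
theorem stmt0 (a : ℝ) (ha : 1 < a) :
    ∫ γ : Fin 3 → ℝ,
        (γ 0 ^ 2 + γ 1 ^ 2 + (1 / a ^ 2) * γ 2 ^ 2) /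
          (γ 0 ^ 2 + γ 1 ^ 2 + (1 / a) * γ 2 ^ 2)
        ∂(Measure.pi fun _ => gaussianReal 0 1)
      = 1 + 1 / a - (1 / a) * (1 / (2 * Real.sqrt (1 - 1 / a))) *
          Real.log ((1 + Real.sqrt (1 - 1 / a)) / (1 - Real.sqrt (1 - 1 / a))) := by
  have ha0 : 0 < a := lt_trans one_pos ha
  set b : ℝ := 1/a with hbdef
  set c : ℝ := 1/a^2 with hcdef
  have hb : 0 < b := by positivity
  have hb1 : b < 1 := by rw [hbdef]; rw [div_lt_one ha0]; exact ha
  set k : ℝ := Real.sqrt (1-b) with hkdef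
  have hkpos : 0 < k := Real.sqrt_pos.2 (by linarith)
  have hk2 : k^2 = 1-b := Real.sq_sqrt (by linarith)
  have hk1 : k < 1 := by nlinarith [hk2]
  set μ : Measure (Fin 3 → ℝ) := Measure.pi fun _ => gaussianReal 0 1 with hμ
  have : IsProbabilityMeasure μ := by rw [hμ]; infer_instance
  set s : (Fin 3 → ℝ) → ℝ := fun γ => γ 0 ^ 2 + γ 1 ^ 2 + b * γ 2 ^ 2 with hs
  set h : (Fin 3 → ℝ) → ℝ := fun γ => γ 2 ^ 2 / s γ with hh
  have hsmeas : Measurable s :=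
    (((measurable_pi_apply 0).pow_const 2).add ((measurable_pi_apply 1).pow_const 2)).add
      (by fun_prop : Measurable fun γ : Fin 3 → ℝ => b * γ 2 ^ 2)
  have hhmeas : Measurable h := ((measurable_pi_apply 2).pow_const 2).div hsmeas
  have hsnn : ∀ γ, 0 ≤ s γ := fun γ => by rw [hs]; positivity
  -- a.e. positivity of the denominator
  have haepos : ∀ᵐ γ ∂μ, 0 < s γ := by
    rw [ae_iff]
    have hsub : {γ : Fin 3 → ℝ | ¬ 0 < s γ} ⊆ {γ : Fin 3 → ℝ | γ 0 = 0} := by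
      intro γ hγ
      simp only [Set.mem_setOf_eq, not_lt] at hγ ⊢
      have h0 := hsnn γ
      have hsval : γ 0 ^ 2 + γ 1 ^ 2 + b * γ 2 ^ 2 ≤ 0 := hγ
      have h00 : γ 0 ^ 2 ≤ 0 := by
        nlinarith [sq_nonneg (γ 1), sq_nonneg (γ 2), mul_nonneg hb.le (sq_nonneg (γ 2))]
      nlinarith [sq_nonneg (γ 0)]
    refine measure_mono_null hsub ?_
    · have : {γ : Fin 3 → ℝ | γ 0 = 0}
          = Set.pi Set.univ (fun i => if i = 0 then ({0} : Set ℝ) else Set.univ) := by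
        ext γ
        simp only [Set.mem_setOf_eq, Set.mem_pi, Set.mem_univ, forall_true_left]
        constructor
        · intro h0 i
          by_cases hi : i = 0
          · subst hi; simp [h0]
          · simp [hi]
        · intro hall
          have := hall 0
          simpa using this
      rw [hμ, this, Measure.pi_pi]
      have h0 : gaussianReal 0 1 ({0} : Set ℝ) = 0 :=
        (gaussianReal_absolutelyContinuous 0 one_ne_zero) Real.volume_singleton
      rw [Fin.prod_univ_three]
      simp [h0]
  -- bound on h
  have hhbound : ∀ γ, 0 ≤ h γ ∧ h γ ≤ b⁻¹ := by
    intro γ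
    constructor
    · rw [hh]; exact div_nonneg (sq_nonneg _) (hsnn γ)
    · rcases eq_or_lt_of_le (hsnn γ) with h0 | hpos
      · have h0' : γ 0 ^ 2 + γ 1 ^ 2 + b * γ 2 ^ 2 = 0 := h0.symm
        have hz : γ 2 ^ 2 = 0 := by
          nlinarith [sq_nonneg (γ 0), sq_nonneg (γ 1), sq_nonneg (γ 2),
            mul_nonneg hb.le (sq_nonneg (γ 2))]
        rw [hh]
        simp only [hz]
        rw [zero_div]
        positivity
      · rw [hh, div_le_iff₀ hpos]
        rw [hs]
        have : b * γ 2 ^ 2 ≤ γ 0 ^ 2 + γ 1 ^ 2 + b * γ 2 ^ 2 := by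
          nlinarith [sq_nonneg (γ 0), sq_nonneg (γ 1)]
        calc γ 2 ^ 2 = b⁻¹ * (b * γ 2 ^ 2) := by field_simp
          _ ≤ b⁻¹ * (γ 0 ^ 2 + γ 1 ^ 2 + b * γ 2 ^ 2) := by
              apply mul_le_mul_of_nonneg_left this (by positivity)
  have hhint : Integrable h μ := by
    apply Integrable.mono' (integrable_const (b⁻¹)) hhmeas.aestronglyMeasurable
    filter_upwards with γ
    rw [Real.norm_eq_abs, abs_of_nonneg (hhbound γ).1]
    exact (hhbound γ).2
  -- step 1: rewrite integrand
  have step1 : ∫ γ, (γ 0 ^ 2 + γ 1 ^ 2 + c * γ 2 ^ 2) / (γ 0 ^ 2 + γ 1 ^ 2 + b * γ 2 ^ 2) ∂μ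
      = 1 + (c - b) * ∫ γ, h γ ∂μ := by
    rw [← integral_const_mul]
    have : ∫ γ, (γ 0 ^ 2 + γ 1 ^ 2 + c * γ 2 ^ 2) / (γ 0 ^ 2 + γ 1 ^ 2 + b * γ 2 ^ 2) ∂μ
        = ∫ γ, (1 + (c - b) * h γ) ∂μ := by
      apply integral_congr_ae
      filter_upwards [haepos] with γ hγ
      rw [hh]
      rw [hs] at hγ
      have hne : γ 0 ^ 2 + γ 1 ^ 2 + b * γ 2 ^ 2 ≠ 0 := ne_of_gt hγ
      show _ = 1 + (c - b) * (γ 2 ^ 2 / (γ 0 ^ 2 + γ 1 ^ 2 + b * γ 2 ^ 2))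
      rw [mul_div_assoc', one_add_div hne]; congr 1
      ring
    rw [this, integral_add (integrable_const 1) (hhint.const_mul (c-b)), integral_const]
    simp
  -- Laplace representation
  set F : (Fin 3 → ℝ) → ℝ → ℝ := fun γ t => γ 2 ^ 2 * Real.exp (-(s γ * t)) with hFdef
  set ν : Measure ℝ := volume.restrict (Ioi 0) with hν
  have hφ := ftc_main hb hb1 hkdef
  have hinner : ∀ t : ℝ, 0 < t → ∫ γ, F γ t ∂μ
      = (1+2*t)⁻¹ * ((1+2*b*t) * Real.sqrt (1+2*b*t))⁻¹ := by
    intro t ht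
    have htb : 0 < t*b := by positivity
    have hprod : ∀ γ : Fin 3 → ℝ, F γ t
        = ∏ i, (![fun x : ℝ => Real.exp (-t*x^2), fun x : ℝ => Real.exp (-t*x^2),
            fun x : ℝ => x^2 * Real.exp (-(t*b)*x^2)] i) (γ i) := by
      intro γ
      rw [Fin.prod_univ_three]
      simp only [Matrix.cons_val_zero, Matrix.cons_val_one, Matrix.head_cons,
        Matrix.cons_val_two, Matrix.tail_cons]
      have harg : -(s γ * t) = (-t * γ 0^2) + ((-t * γ 1^2) + (-(t*b) * γ 2^2)) := by
        rw [hs]; ring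
      rw [hFdef]
      simp only []
      rw [harg, Real.exp_add, Real.exp_add]
      ring
    have e0 : ∫ γ, F γ t ∂μ = ∏ i, ∫ x : ℝ,
        (![fun x : ℝ => Real.exp (-t*x^2), fun x : ℝ => Real.exp (-t*x^2),
            fun x : ℝ => x^2 * Real.exp (-(t*b)*x^2)] i) x ∂(gaussianReal 0 1) := by
      rw [show (∫ γ, F γ t ∂μ) = ∫ γ : Fin 3 → ℝ, ∏ i,
          (![fun x : ℝ => Real.exp (-t*x^2), fun x : ℝ => Real.exp (-t*x^2),
            fun x : ℝ => x^2 * Real.exp (-(t*b)*x^2)] i) (γ i) ∂μ from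
        integral_congr_ae (Filter.Eventually.of_forall (fun γ => hprod γ)), hμ]
      exact integral_pi_gen _ (fun i => inferInstance) _
    rw [e0, Fin.prod_univ_three]
    simp only [Matrix.cons_val_zero, Matrix.cons_val_one, Matrix.head_cons,
      Matrix.cons_val_two, Matrix.tail_cons]
    rw [gauss1 t ht, gauss2 (t*b) htb]
    have e1 : (Real.sqrt (1+2*t))⁻¹ * (Real.sqrt (1+2*t))⁻¹ = (1+2*t)⁻¹ := by
      rw [← mul_inv, Real.mul_self_sqrt (by linarith)]
    rw [← mul_assoc, e1]
    ring_nf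
  have hpt : ∀ᵐ γ ∂μ, (∫ t in Ioi (0:ℝ), F γ t) = h γ := by
    filter_upwards [haepos] with γ hγ
    rw [hFdef]
    simp only []
    rw [MeasureTheory.integral_const_mul, exp_Ioi (s γ) hγ]
    exact (div_eq_mul_inv _ _).symm
  have hGmeas : AEStronglyMeasurable (fun p : (Fin 3 → ℝ) × ℝ => F p.1 p.2) (μ.prod ν) := by
    apply Measurable.aestronglyMeasurable
    exact (((measurable_pi_apply 2).comp measurable_fst).pow_const 2).mul
      (((hsmeas.comp measurable_fst).mul measurable_snd).neg.exp)
  have hGint : Integrable (Function.uncurry F) (μ.prod ν) := by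
    rw [show Function.uncurry F = fun p : (Fin 3 → ℝ) × ℝ => F p.1 p.2 from rfl]
    rw [integrable_prod_iff' hGmeas]
    constructor
    · rw [hν]
      filter_upwards [ae_restrict_mem measurableSet_Ioi] with t ht
      have htpos : (0:ℝ) < t := ht
      have htb : 0 < t*b := by positivity
      apply Integrable.mono' (integrable_const ((t*b)⁻¹))
      · exact (((measurable_pi_apply 2).pow_const 2).mul
          ((hsmeas.mul_const t).neg.exp)).aestronglyMeasurable
      · filter_upwards with γ
        have hz := sq_nonneg (γ 2)
        have h1 : b * γ 2^2 ≤ s γ := by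
          show b * γ 2^2 ≤ γ 0 ^ 2 + γ 1 ^ 2 + b * γ 2 ^ 2
          nlinarith [sq_nonneg (γ 0), sq_nonneg (γ 1)]
        have e1 : Real.exp (-(s γ * t)) ≤ Real.exp (-(b*γ 2^2*t)) := by
          apply Real.exp_le_exp.2; nlinarith
        have h3 : γ 2^2 * (t*b) ≤ Real.exp (b*γ 2^2*t) := by
          nlinarith [Real.add_one_le_exp (b*γ 2^2*t)]
        have h4 : γ 2^2 * Real.exp (-(b*γ 2^2*t)) ≤ (t*b)⁻¹ := by
          rw [Real.exp_neg, ← div_eq_mul_inv, div_le_iff₀ (Real.exp_pos _),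
            inv_mul_eq_div, ← le_div_iff₀ htb] at *
          · exact h3
        rw [Real.norm_eq_abs, abs_of_nonneg (by positivity)]
        calc γ 2^2 * Real.exp (-(s γ * t)) ≤ γ 2^2 * Real.exp (-(b*γ 2^2*t)) :=
              mul_le_mul_of_nonneg_left e1 hz
          _ ≤ (t*b)⁻¹ := h4
    · apply Integrable.congr hφ.1
      filter_upwards [ae_restrict_mem measurableSet_Ioi] with t ht
      have : ∫ γ, ‖F γ t‖ ∂μ = ∫ γ, F γ t ∂μ := by
        apply integral_congr_ae
        filter_upwards with γ
        rw [Real.norm_eq_abs, abs_of_nonneg (by positivity)]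
      rw [this, hinner t ht]
  have hswap := integral_integral_swap hGint
  have hJ : ∫ γ, h γ ∂μ
      = (k^2)⁻¹ * ((2*k)⁻¹ * (Real.log (1+k) - Real.log (1-k)) - 1) := by
    rw [← integral_congr_ae hpt, hν] at *
    rw [hswap, ← hφ.2]
    apply integral_congr_ae
    filter_upwards [ae_restrict_mem measurableSet_Ioi] with t ht
    exact hinner t ht
  rw [step1, hJ]
  -- final algebra
  have hlog : Real.log ((1+k)/(1-k)) = Real.log (1+k) - Real.log (1-k) :=
    Real.log_div (by linarith) (by linarith)
  rw [hlog]
  have hcb : c - b = -(b * k^2) := by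
    rw [hk2, hcdef, hbdef]; field_simp; ring
  rw [hcb]
  have hkne : k ≠ 0 := hkpos.ne'
  field_simp
  ring
end

section
/- Let γ₁, γ₂, γ₃ be independent standard real Gaussian random variables and let a > 1. Then E[√(γ₁² + γ₂² + (1/a)γ₃²)] = √(2/π)·(1/√a + arcsin(√(1−1/a))/√(1−1/a)). -/
open MeasureTheory ProbabilityTheory Real Set
open scoped NNReal ENNReal

namespace Stmt2Aux

lemma intg0 : Integrable (fun x : ℝ => Real.exp (-x^2/2)) := by
  have := integrable_exp_neg_mul_sq (b := (1/2:ℝ)) (by norm_num)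
  refine this.congr ?_; filter_upwards with x; ring_nf

lemma intg1 : Integrable (fun x : ℝ => |x| * Real.exp (-x^2/2)) := by
  have := (integrable_mul_exp_neg_mul_sq (b := (1/2:ℝ)) (by norm_num)).abs
  refine this.congr ?_
  filter_upwards with x
  rw [abs_mul, abs_of_pos (Real.exp_pos _)]
  ring_nf

lemma intg2 : Integrable (fun x : ℝ => x^2 * Real.exp (-x^2/2)) := by
  have := integrable_rpow_mul_exp_neg_mul_sq (b := (1/2:ℝ)) (by norm_num) (s := 2) (by norm_num)
  refine this.congr ?_
  filter_upwards with x
  rw [show ((2:ℝ)) = ((2:ℕ):ℝ) by norm_num, Real.rpow_natCast]; ring_nf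

lemma radial : ∫ r in Ioi (0:ℝ), r^3 * Real.exp (-r^2/2) = 2 := by
  have hderiv : ∀ r ∈ Ici (0:ℝ), HasDerivAt (fun r : ℝ => -(r^2+2) * Real.exp (-r^2/2))
      (r^3 * Real.exp (-r^2/2)) r := by
    intro r _
    have h1 : HasDerivAt (fun r : ℝ => -(r^2+2)) (-(2*r)) r := by
      have := ((hasDerivAt_pow 2 r).add_const 2).neg
      exact this.congr_deriv (by norm_num)
    have h2 : HasDerivAt (fun r : ℝ => Real.exp (-r^2/2)) (Real.exp (-r^2/2) * (-r)) r := by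
      have hin : HasDerivAt (fun r : ℝ => -r^2/2) (-r) r := by
        have := ((hasDerivAt_pow 2 r).neg.div_const 2)
        simpa using this.congr_deriv (by ring)
      exact (Real.hasDerivAt_exp _).comp r hin
    have := h1.mul h2
    exact this.congr_deriv (by ring)
  have hint : IntegrableOn (fun r : ℝ => r^3 * Real.exp (-r^2/2)) (Ioi 0) := by
    have := integrable_rpow_mul_exp_neg_mul_sq (b := (1/2:ℝ)) (by norm_num) (s := 3) (by norm_num)
    refine (this.congr ?_).integrableOn
    filter_upwards with x
    rw [show ((3:ℝ)) = ((3:ℕ):ℝ) by norm_num, Real.rpow_natCast]; ring_nf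
  have htend : Filter.Tendsto (fun r : ℝ => -(r^2+2) * Real.exp (-r^2/2)) Filter.atTop (nhds 0) := by
    have a := Real.tendsto_pow_mul_exp_neg_atTop_nhds_zero 1
    have b := Real.tendsto_exp_neg_atTop_nhds_zero
    have T1 : Filter.Tendsto (fun u : ℝ => (2*u+2) * Real.exp (-u)) Filter.atTop (nhds 0) := by
      have := (a.const_mul 2).add (b.const_mul 2)
      simp only [mul_zero, add_zero] at this
      refine this.congr ?_
      intro u; ring
    have hq : Filter.Tendsto (fun r : ℝ => r^2/2) Filter.atTop Filter.atTop :=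
      (Filter.tendsto_pow_atTop two_ne_zero).atTop_div_const (by norm_num)
    have := (T1.comp hq).neg
    simp only [neg_zero] at this
    refine this.congr ?_
    intro r
    simp only [Function.comp]
    ring_nf
  have := integral_Ioi_of_hasDerivAt_of_tendsto' hderiv hint htend
  rw [this]; norm_num

lemma angular_sub {k : ℝ} (hk0 : 0 < k) (hk1 : k < 1) :
    ∫ u in (-1:ℝ)..1, Real.sqrt (1 - k * u^2)
      = Real.sqrt (1-k) + Real.arcsin (Real.sqrt k) / Real.sqrt k := by
  have hks : Real.sqrt k < 1 := by
    rw [show (1:ℝ) = Real.sqrt 1 by simp]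
    exact Real.sqrt_lt_sqrt hk0.le hk1
  have hkspos : 0 < Real.sqrt k := Real.sqrt_pos.mpr hk0
  set H : ℝ → ℝ := fun u => (u * Real.sqrt (1 - k*u^2) + Real.arcsin (Real.sqrt k * u) / Real.sqrt k)/2 with hH
  have hderiv : ∀ u ∈ uIcc (-1:ℝ) 1, HasDerivAt H (Real.sqrt (1 - k*u^2)) u := by
    intro u hu
    rw [uIcc_of_le (by norm_num)] at hu
    have hu1 : u^2 ≤ 1 := by
      rw [sq_le_one_iff_abs_le_one, abs_le]; exact ⟨hu.1, hu.2⟩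
    have hpos : 0 < 1 - k*u^2 := by nlinarith
    have hsq : Real.sqrt (1-k*u^2) ≠ 0 := (Real.sqrt_pos.mpr hpos).ne'
    have h1 : HasDerivAt (fun u : ℝ => 1 - k*u^2) (-(2*k*u)) u := by
      have := ((hasDerivAt_pow 2 u).const_mul k).const_sub 1
      simpa using this.congr_deriv (by ring)
    have h2 : HasDerivAt (fun u : ℝ => Real.sqrt (1-k*u^2)) (-(2*k*u) / (2 * Real.sqrt (1-k*u^2))) u :=
      h1.sqrt hpos.ne'
    have h3 : HasDerivAt (fun u : ℝ => u * Real.sqrt (1-k*u^2))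
        (Real.sqrt (1-k*u^2) + u * (-(2*k*u) / (2 * Real.sqrt (1-k*u^2)))) u := by
      exact ((hasDerivAt_id u).mul h2).congr_deriv (by simp)
    have habs : |Real.sqrt k * u| < 1 := by
      rw [abs_mul, abs_of_pos hkspos]
      calc Real.sqrt k * |u| ≤ Real.sqrt k * 1 := by
            refine mul_le_mul_of_nonneg_left ?_ hkspos.le
            rw [abs_le]; exact ⟨hu.1, hu.2⟩
        _ < 1 := by simpa using hks
    have h4 : HasDerivAt (fun u : ℝ => Real.arcsin (Real.sqrt k * u))
        ((1 / Real.sqrt (1 - (Real.sqrt k * u)^2)) * Real.sqrt k) u := by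
      have ha := Real.hasDerivAt_arcsin (x := Real.sqrt k * u)
        (by intro h; rw [h] at habs; simp at habs)
        (by intro h; rw [h] at habs; simp at habs)
      have hb : HasDerivAt (fun u : ℝ => Real.sqrt k * u) (Real.sqrt k) u := by
        simpa using (hasDerivAt_id u).const_mul (Real.sqrt k)
      exact ha.comp u hb
    have hsqk : (Real.sqrt k * u)^2 = k * u^2 := by
      rw [mul_pow, Real.sq_sqrt hk0.le]
    rw [hsqk] at h4
    have := (h3.add (h4.div_const (Real.sqrt k))).div_const 2
    refine this.congr_deriv ?_
    have hsqsq : Real.sqrt (1-k*u^2) * Real.sqrt (1-k*u^2) = 1 - k*u^2 :=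
      Real.mul_self_sqrt hpos.le
    field_simp
    linear_combination (-1 : ℝ) * hsqsq
  have hcont : IntervalIntegrable (fun u : ℝ => Real.sqrt (1 - k*u^2)) volume (-1) 1 :=
    (Real.continuous_sqrt.comp (by continuity)).intervalIntegrable _ _
  rw [intervalIntegral.integral_eq_sub_of_hasDerivAt hderiv hcont]
  simp only [hH, one_pow, neg_one_sq, mul_one, one_mul, neg_one_mul, neg_mul,
    Real.arcsin_neg, mul_neg_one]
  ring

lemma angular {k : ℝ} (hk0 : 0 < k) (hk1 : k < 1) :
    ∫ φ in (0:ℝ)..π, Real.sin φ * Real.sqrt (1 - k * Real.cos φ^2)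
      = Real.sqrt (1-k) + Real.arcsin (Real.sqrt k) / Real.sqrt k := by
  have hg : Continuous (fun u : ℝ => Real.sqrt (1 - k * u^2)) :=
    Real.continuous_sqrt.comp (by continuity)
  have := intervalIntegral.integral_comp_smul_deriv
    (f := fun φ : ℝ => -Real.cos φ) (f' := Real.sin)
    (g := fun u : ℝ => Real.sqrt (1 - k * u^2))
    (a := 0) (b := π)
    (fun φ _ => by exact (Real.hasDerivAt_cos φ).neg.congr_deriv (by simp))
    Real.continuous_sin.continuousOn hg
  simp only [Real.cos_zero, Real.cos_pi, neg_neg, smul_eq_mul, neg_sq] at this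
  rw [← angular_sub hk0 hk1, ← this]
  simp [Function.comp, neg_sq]

noncomputable def pdf1 (x : ℝ) : ℝ := (Real.sqrt (2*π))⁻¹ * Real.exp (-x^2/2)

lemma pdf1_nonneg (x : ℝ) : 0 ≤ pdf1 x := by
  unfold pdf1; positivity

lemma pdf1_eq (x : ℝ) : gaussianPDFReal 0 1 x = pdf1 x := by
  unfold pdf1
  rw [gaussianPDFReal]
  norm_num

lemma measurable_pdf1 : Measurable pdf1 := by
  unfold pdf1; fun_prop

lemma continuous_pdf1 : Continuous pdf1 := by unfold pdf1; fun_prop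

lemma gaussian_withDensity :
    gaussianReal 0 1 = volume.withDensity (fun x => ENNReal.ofReal (pdf1 x)) := by
  rw [gaussianReal_of_var_ne_zero 0 one_ne_zero]
  congr 1
  funext x
  rw [gaussianPDF, pdf1_eq]

lemma gauss_integral (f : ℝ → ℝ) :
    ∫ x, f x ∂(gaussianReal 0 1) = ∫ x, pdf1 x * f x := by
  rw [gaussian_withDensity]
  have : (fun x => ENNReal.ofReal (pdf1 x)) = (fun x => ((Real.toNNReal (pdf1 x) : ℝ≥0) : ℝ≥0∞)) := by
    funext x; rfl
  rw [this, integral_withDensity_eq_integral_smul (measurable_pdf1.real_toNNReal) f]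
  congr 1
  funext x
  rw [NNReal.smul_def, smul_eq_mul, Real.coe_toNNReal _ (pdf1_nonneg x)]

lemma gauss_integrable (f : ℝ → ℝ)
    (hint : Integrable (fun x => pdf1 x * f x)) : Integrable f (gaussianReal 0 1) := by
  rw [gaussian_withDensity]
  have : (fun x => ENNReal.ofReal (pdf1 x)) = (fun x => ((Real.toNNReal (pdf1 x) : ℝ≥0) : ℝ≥0∞)) := by
    funext x; rfl
  rw [this]
  rw [integrable_withDensity_iff_integrable_smul (measurable_pdf1.real_toNNReal)]
  refine hint.congr ?_
  filter_upwards with x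
  rw [NNReal.smul_def, smul_eq_mul, Real.coe_toNNReal _ (pdf1_nonneg x)]

lemma gauss_abs_integrable : Integrable (fun x => |x|) (gaussianReal 0 1) := by
  apply gauss_integrable
  have := intg1.const_mul (Real.sqrt (2*π))⁻¹
  refine this.congr ?_
  filter_upwards with x
  unfold pdf1
  ring

lemma plane_polar (w : ℝ) :
    ∫ p : ℝ × ℝ, pdf1 p.1 * (pdf1 p.2 * Real.sqrt (p.1^2 + p.2^2 + w)) ∂(volume.prod volume)
      = ∫ r in Ioi (0:ℝ), r * Real.exp (-r^2/2) * Real.sqrt (r^2 + w) := by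
  rw [← Measure.volume_eq_prod]
  rw [← integral_comp_polarCoord_symm (fun p => pdf1 p.1 * (pdf1 p.2 * Real.sqrt (p.1^2 + p.2^2 + w)))]
  rw [polarCoord_target]
  have hmeas : MeasurableSet (Ioi (0:ℝ) ×ˢ Ioo (-π) π) :=
    measurableSet_Ioi.prod measurableSet_Ioo
  rw [setIntegral_congr_fun hmeas (g := fun p : ℝ × ℝ =>
      ((2*π)⁻¹ * (p.1 * Real.exp (-p.1^2/2) * Real.sqrt (p.1^2 + w))) * (fun _ : ℝ => (1:ℝ)) p.2) ?_]
  · have hpm := setIntegral_prod_mul (μ := (volume : Measure ℝ)) (ν := (volume : Measure ℝ))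
      (f := fun r : ℝ => (2*π)⁻¹ * (r * Real.exp (-r^2/2) * Real.sqrt (r^2 + w)))
      (g := fun _ : ℝ => (1:ℝ)) (Ioi 0) (Ioo (-π) π)
    rw [Measure.volume_eq_prod]
    erw [hpm]
    simp only [integral_const, MeasurableSet.univ, Measure.restrict_apply, univ_inter,
      Real.volume_Ioo, smul_eq_mul, mul_one]
    rw [measureReal_restrict_apply_univ, Real.volume_real_Ioo_of_le (by linarith [pi_pos])]
    rw [integral_const_mul]
    have : π - -π = 2 * π := by ring
    rw [this]
    have hπ : (π:ℝ) ≠ 0 := pi_ne_zero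
    field_simp
  · rintro ⟨r, θ⟩ ⟨hr, hθ⟩
    simp only [polarCoord_symm_apply, smul_eq_mul]
    have hr' : (0:ℝ) < r := hr
    have hcs : (r * Real.cos θ)^2 + (r * Real.sin θ)^2 = r^2 := by
      nlinarith [Real.sin_sq_add_cos_sq θ]
    rw [hcs]
    unfold pdf1
    rw [show ((Real.sqrt (2*π))⁻¹ * Real.exp (-(r * Real.cos θ)^2/2) *
        ((Real.sqrt (2*π))⁻¹ * Real.exp (-(r * Real.sin θ)^2/2) * Real.sqrt (r^2+w)))
      = ((Real.sqrt (2*π))⁻¹ * (Real.sqrt (2*π))⁻¹) *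
        (Real.exp (-(r * Real.cos θ)^2/2) * Real.exp (-(r * Real.sin θ)^2/2)) * Real.sqrt (r^2+w)
      from by ring]
    rw [← Real.exp_add]
    rw [show (-(r * Real.cos θ)^2/2 + -(r * Real.sin θ)^2/2) = -r^2/2 from by linarith [hcs]]
    rw [← mul_inv, Real.mul_self_sqrt (by positivity)]
    ring

noncomputable def f2 (c : ℝ) (p : ℝ × ℝ) : ℝ :=
  if 0 < p.2 then p.2 * Real.exp (-(p.2^2+p.1^2)/2) * Real.sqrt (p.2^2 + c*p.1^2) else 0

lemma measurable_f2 (c : ℝ) : Measurable (f2 c) := by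
  unfold f2
  refine Measurable.ite (measurableSet_lt measurable_const measurable_snd) ?_ measurable_const
  fun_prop

lemma integrable_f2 {c : ℝ} (hc0 : 0 < c) (hc1 : c < 1) :
    Integrable (f2 c) (volume.prod volume) := by
  have hD : Integrable (fun p : ℝ × ℝ =>
      Real.exp (-p.1^2/2) * (p.2^2 * Real.exp (-p.2^2/2))
        + (|p.1| * Real.exp (-p.1^2/2)) * (|p.2| * Real.exp (-p.2^2/2))) (volume.prod volume) :=
    (intg0.mul_prod intg2).add (intg1.mul_prod intg1)
  refine hD.mono' ((measurable_f2 c).aestronglyMeasurable) ?_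
  filter_upwards with p
  rcases p with ⟨z, r⟩
  unfold f2
  dsimp only
  split_ifs with hr
  · have hre : Real.exp (-(r^2+z^2)/2) = Real.exp (-r^2/2) * Real.exp (-z^2/2) := by
      rw [← Real.exp_add]; ring_nf
    have h1 : Real.sqrt (r^2 + c*z^2) ≤ r + |z| := by
      rw [show r + |z| = Real.sqrt ((r+|z|)^2) from (Real.sqrt_sq (by positivity)).symm]
      apply Real.sqrt_le_sqrt
      nlinarith [sq_abs z, abs_nonneg z, sq_nonneg z, hr.le]
    rw [Real.norm_eq_abs, abs_of_nonneg (by positivity)]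
    rw [hre]
    have key : r * Real.sqrt (r^2 + c*z^2) ≤ r^2 + r * |z| := by
      nlinarith [mul_le_mul_of_nonneg_left h1 hr.le]
    calc r * (Real.exp (-r^2/2) * Real.exp (-z^2/2)) * Real.sqrt (r^2+c*z^2)
        = (r * Real.sqrt (r^2+c*z^2)) * (Real.exp (-r^2/2) * Real.exp (-z^2/2)) := by ring
      _ ≤ (r^2 + r * |z|) * (Real.exp (-r^2/2) * Real.exp (-z^2/2)) := by
          apply mul_le_mul_of_nonneg_right key (by positivity)
      _ = Real.exp (-z^2/2) * (r^2 * Real.exp (-r^2/2)) + (|z| * Real.exp (-z^2/2)) * (r * Real.exp (-r^2/2)) := by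
          ring
      _ ≤ _ := by
          have : r ≤ |r| := le_abs_self r
          have h2 : (|z| * Real.exp (-z^2/2)) * (r * Real.exp (-r^2/2))
              ≤ (|z| * Real.exp (-z^2/2)) * (|r| * Real.exp (-r^2/2)) := by
            apply mul_le_mul_of_nonneg_left _ (by positivity)
            apply mul_le_mul_of_nonneg_right this (by positivity)
          linarith
  · simp only [norm_zero]; positivity

lemma f2_integral {c : ℝ} (hc0 : 0 < c) (hc1 : c < 1) :
    ∫ p : ℝ × ℝ, f2 c p ∂(volume.prod volume)
      = 2 * (Real.sqrt c + Real.arcsin (Real.sqrt (1-c)) / Real.sqrt (1-c)) := by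
  set k := 1 - c with hk
  have hk0 : 0 < k := by simp [hk]; linarith
  have hk1 : k < 1 := by simp [hk]; linarith
  rw [← Measure.volume_eq_prod, ← integral_comp_polarCoord_symm (f2 c), polarCoord_target]
  have hmeas : MeasurableSet (Ioi (0:ℝ) ×ˢ Ioo (-π) π) :=
    measurableSet_Ioi.prod measurableSet_Ioo
  rw [setIntegral_congr_fun hmeas (g := fun p : ℝ × ℝ =>
      (fun ρ : ℝ => ρ^3 * Real.exp (-ρ^2/2)) p.1 *
      (fun φ : ℝ => if 0 < Real.sin φ then Real.sin φ * Real.sqrt (1 - k * Real.cos φ^2) else 0) p.2) ?_]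
  · have hpm := setIntegral_prod_mul (μ := (volume : Measure ℝ)) (ν := (volume : Measure ℝ))
      (f := fun ρ : ℝ => ρ^3 * Real.exp (-ρ^2/2))
      (g := fun φ : ℝ => if 0 < Real.sin φ then Real.sin φ * Real.sqrt (1 - k * Real.cos φ^2) else 0)
      (Ioi 0) (Ioo (-π) π)
    rw [Measure.volume_eq_prod]
    erw [hpm]
    rw [radial]
    have hB : ∫ φ in Ioo (-π) π, (if 0 < Real.sin φ then Real.sin φ * Real.sqrt (1 - k * Real.cos φ^2) else 0)
        = Real.sqrt (1-k) + Real.arcsin (Real.sqrt k) / Real.sqrt k := by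
      rw [setIntegral_congr_fun measurableSet_Ioo (g := fun φ : ℝ =>
          (Ioo (0:ℝ) π).indicator (fun φ => Real.sin φ * Real.sqrt (1 - k * Real.cos φ^2)) φ) ?_]
      · rw [setIntegral_indicator measurableSet_Ioo]
        rw [inter_eq_self_of_subset_right (Ioo_subset_Ioo (by linarith [pi_pos]) le_rfl)]
        rw [← MeasureTheory.integral_Ioc_eq_integral_Ioo, ← intervalIntegral.integral_of_le pi_pos.le]
        exact angular hk0 hk1
      · intro φ hφ
        dsimp only
        by_cases hm : φ ∈ Ioo (0:ℝ) π
        · rw [indicator_of_mem hm, if_pos (Real.sin_pos_of_pos_of_lt_pi hm.1 hm.2)]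
        · rw [indicator_of_notMem hm, if_neg]
          simp only [mem_Ioo, not_and, not_lt] at hm
          rcases lt_or_ge 0 φ with h0 | h0
          · have : π ≤ φ := hm h0
            exact absurd hφ.2 (not_lt.mpr this)
          · exact not_lt.mpr (Real.sin_nonpos_of_nonpos_of_neg_pi_le h0 hφ.1.le)
    rw [hB]
    have : Real.sqrt (1-k) = Real.sqrt c := by rw [hk]; ring_nf
    rw [this, hk]
  · rintro ⟨ρ, φ⟩ ⟨hρ, hφ⟩
    simp only [polarCoord_symm_apply, smul_eq_mul]
    have hρ' : (0:ℝ) < ρ := hρ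
    unfold f2
    dsimp only
    by_cases hs : 0 < Real.sin φ
    · rw [if_pos (mul_pos hρ' hs), if_pos hs]
      have hcs : (ρ * Real.sin φ)^2 + (ρ * Real.cos φ)^2 = ρ^2 := by
        nlinarith [Real.sin_sq_add_cos_sq φ]
      have harg : (ρ * Real.sin φ)^2 + c * (ρ * Real.cos φ)^2 = ρ^2 * (1 - k * Real.cos φ^2) := by
        rw [hk]; nlinarith [Real.sin_sq_add_cos_sq φ]
      rw [hcs, harg, Real.sqrt_mul (sq_nonneg ρ), Real.sqrt_sq hρ'.le]
      ring
    · have hcond : ¬ 0 < ρ * Real.sin φ := by intro h; exact hs (by nlinarith)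
      rw [if_neg hcond, mul_zero, if_neg hs, mul_zero]

lemma outer {c : ℝ} (hc0 : 0 < c) (hc1 : c < 1) :
    ∫ z : ℝ, Real.exp (-z^2/2) *
        (∫ r in Ioi (0:ℝ), r * Real.exp (-r^2/2) * Real.sqrt (r^2 + c*z^2))
      = 2 * (Real.sqrt c + Real.arcsin (Real.sqrt (1-c)) / Real.sqrt (1-c)) := by
  rw [← f2_integral hc0 hc1]
  have hfun : ∀ z : ℝ, Real.exp (-z^2/2) *
      (∫ r in Ioi (0:ℝ), r * Real.exp (-r^2/2) * Real.sqrt (r^2 + c*z^2))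
      = ∫ r : ℝ, f2 c (z, r) := by
    intro z
    have hind : ∀ r : ℝ, f2 c (z, r)
        = (Ioi (0:ℝ)).indicator (fun r => r * Real.exp (-(r^2+z^2)/2) * Real.sqrt (r^2+c*z^2)) r := by
      intro r
      simp only [Set.indicator_apply, Set.mem_Ioi, f2]
    simp only [hind]
    rw [integral_indicator measurableSet_Ioi]
    rw [← integral_const_mul]
    apply setIntegral_congr_fun measurableSet_Ioi
    intro r _
    dsimp only
    rw [show (-(r^2+z^2)/2 : ℝ) = -r^2/2 + -z^2/2 from by ring, Real.exp_add]
    ring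
  simp only [hfun]
  have hi : Integrable (Function.uncurry fun z r : ℝ => f2 c (z, r)) (volume.prod volume) :=
    integrable_f2 hc0 hc1
  rw [MeasureTheory.integral_integral hi]

lemma plane_gauss {c : ℝ} (hc0 : 0 < c) (hc1 : c < 1) (z : ℝ) :
    ∫ p : ℝ × ℝ, Real.sqrt (p.1^2 + p.2^2 + c*z^2)
        ∂((gaussianReal 0 1).prod (gaussianReal 0 1))
      = ∫ r in Ioi (0:ℝ), r * Real.exp (-r^2/2) * Real.sqrt (r^2 + c*z^2) := by
  set w := c * z^2 with hw
  have hw0 : 0 ≤ w := by positivity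
  have hcont : Continuous (fun p : ℝ × ℝ => Real.sqrt (p.1^2 + p.2^2 + w)) := by
    apply Real.continuous_sqrt.comp
    fun_prop
  have hsqrt_le : ∀ p : ℝ × ℝ, Real.sqrt (p.1^2 + p.2^2 + w)
      ≤ |p.1| + (|p.2| + Real.sqrt w) := by
    intro p
    rw [show |p.1| + (|p.2| + Real.sqrt w)
        = Real.sqrt ((|p.1| + (|p.2| + Real.sqrt w))^2) from
      (Real.sqrt_sq (by positivity)).symm]
    apply Real.sqrt_le_sqrt
    nlinarith [sq_abs p.1, sq_abs p.2, abs_nonneg p.1, abs_nonneg p.2,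
      Real.sq_sqrt hw0, Real.sqrt_nonneg w, mul_nonneg (abs_nonneg p.1) (abs_nonneg p.2),
      mul_nonneg (abs_nonneg p.1) (Real.sqrt_nonneg w),
      mul_nonneg (abs_nonneg p.2) (Real.sqrt_nonneg w)]
  have hint : Integrable (fun p : ℝ × ℝ => Real.sqrt (p.1^2 + p.2^2 + w))
      ((gaussianReal 0 1).prod (gaussianReal 0 1)) := by
    have hD : Integrable (fun p : ℝ × ℝ => |p.1| * 1 + ((1:ℝ) * |p.2| + Real.sqrt w))
        ((gaussianReal 0 1).prod (gaussianReal 0 1)) :=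
      (gauss_abs_integrable.mul_prod (integrable_const 1)).add
        (((integrable_const 1).mul_prod gauss_abs_integrable).add (integrable_const _))
    refine hD.mono' hcont.aestronglyMeasurable ?_
    filter_upwards with p
    rw [Real.norm_eq_abs, abs_of_nonneg (Real.sqrt_nonneg _)]
    have := hsqrt_le p
    simp only [mul_one, one_mul]
    linarith
  rw [integral_prod _ hint]
  simp only [gauss_integral]
  have hmul : ∀ x : ℝ, pdf1 x * ∫ y, pdf1 y * Real.sqrt (x^2 + y^2 + w)
      = ∫ y, pdf1 x * (pdf1 y * Real.sqrt (x^2 + y^2 + w)) := by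
    intro x
    rw [integral_const_mul]
  simp only [hmul]
  have hIvol : Integrable (fun p : ℝ × ℝ =>
      pdf1 p.1 * (pdf1 p.2 * Real.sqrt (p.1^2 + p.2^2 + w))) (volume.prod volume) := by
    have hD : Integrable (fun p : ℝ × ℝ =>
        ((Real.sqrt (2*π))⁻¹ * (Real.sqrt (2*π))⁻¹) *
          (((|p.1| * Real.exp (-p.1^2/2)) * Real.exp (-p.2^2/2)
            + Real.exp (-p.1^2/2) * (|p.2| * Real.exp (-p.2^2/2)))
            + Real.sqrt w * (Real.exp (-p.1^2/2) * Real.exp (-p.2^2/2))))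
        (volume.prod volume) :=
      (((intg1.mul_prod intg0).add (intg0.mul_prod intg1)).add
        ((intg0.mul_prod intg0).const_mul (Real.sqrt w))).const_mul _
    refine hD.mono' ?_ ?_
    · exact (continuous_pdf1.comp continuous_fst |>.mul
        ((continuous_pdf1.comp continuous_snd).mul hcont)).aestronglyMeasurable
    filter_upwards with p
    have h1 := hsqrt_le p
    rw [Real.norm_eq_abs, abs_of_nonneg (mul_nonneg (pdf1_nonneg _)
      (mul_nonneg (pdf1_nonneg _) (Real.sqrt_nonneg _)))]
    rw [show pdf1 p.1 * (pdf1 p.2 * Real.sqrt (p.1^2+p.2^2+w))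
        = ((Real.sqrt (2*π))⁻¹ * (Real.sqrt (2*π))⁻¹) *
          ((Real.exp (-p.1^2/2) * Real.exp (-p.2^2/2)) * Real.sqrt (p.1^2+p.2^2+w)) from by
      unfold pdf1; ring]
    refine le_trans (mul_le_mul_of_nonneg_left
      (mul_le_mul_of_nonneg_left h1 (by positivity)) (by positivity)) ?_
    apply le_of_eq
    ring
  rw [MeasureTheory.integral_integral hIvol]
  exact plane_polar w

end Stmt2Aux

open Stmt2Aux in
/-- For independent standard Gaussians γ₁,γ₂,γ₃ and `a > 1`,
`E[√(γ₁²+γ₂²+(1/a)γ₃²)] = √(2/π)·(1/√a + arcsin(√(1−1/a))/√(1−1/a))`. -/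
theorem stmt2 (a : ℝ) (ha : 1 < a) :
    ∫ γ : Fin 3 → ℝ,
        Real.sqrt (γ 0 ^ 2 + γ 1 ^ 2 + (1 / a) * γ 2 ^ 2)
        ∂(Measure.pi fun _ => gaussianReal 0 1)
      = Real.sqrt (2 / Real.pi) *
          (1 / Real.sqrt a + Real.arcsin (Real.sqrt (1 - 1 / a)) / Real.sqrt (1 - 1 / a)) := by
  have ha0 : 0 < a := by linarith
  set c : ℝ := 1/a with hc
  have hc0 : 0 < c := by positivity
  have hc1 : c < 1 := by rw [hc, div_lt_one ha0]; linarith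
  have step1 : (∫ γ : Fin 3 → ℝ, Real.sqrt (γ 0 ^ 2 + γ 1 ^ 2 + c * γ 2 ^ 2)
        ∂(Measure.pi fun _ => gaussianReal 0 1))
      = ∫ q : ℝ × ℝ × ℝ, Real.sqrt (q.2.1^2 + q.2.2^2 + c*q.1^2)
          ∂((gaussianReal 0 1).prod ((gaussianReal 0 1).prod (gaussianReal 0 1))) := by
    have h1 := measurePreserving_piFinSuccAbove (fun _ : Fin 3 => gaussianReal 0 1) 2
    have h2 := (MeasurePreserving.id (gaussianReal 0 1)).prod
      (measurePreserving_piFinTwo (fun _ : Fin 2 => gaussianReal 0 1))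
    have emb2 : MeasurableEmbedding
        (Prod.map (id : ℝ → ℝ) (MeasurableEquiv.piFinTwo (fun _ : Fin 2 => ℝ))) :=
      MeasurableEmbedding.id.prodMap (MeasurableEquiv.piFinTwo _).measurableEmbedding
    calc (∫ γ : Fin 3 → ℝ, Real.sqrt (γ 0 ^ 2 + γ 1 ^ 2 + c * γ 2 ^ 2)
            ∂(Measure.pi fun _ => gaussianReal 0 1))
        = ∫ γ : Fin 3 → ℝ,
            (fun p : ℝ × (Fin 2 → ℝ) => Real.sqrt ((p.2 0)^2 + (p.2 1)^2 + c * p.1^2))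
              ((MeasurableEquiv.piFinSuccAbove (fun _ : Fin 3 => ℝ) 2) γ)
            ∂(Measure.pi fun _ => gaussianReal 0 1) := by
          congr 1
      _ = ∫ p : ℝ × (Fin 2 → ℝ),
            Real.sqrt ((p.2 0)^2 + (p.2 1)^2 + c * p.1^2)
            ∂((gaussianReal 0 1).prod (Measure.pi fun _ : Fin 2 => gaussianReal 0 1)) :=
          by exact h1.integral_comp (MeasurableEquiv.piFinSuccAbove (fun _ : Fin 3 => ℝ) 2).measurableEmbedding (fun p : ℝ × (Fin 2 → ℝ) => Real.sqrt ((p.2 0)^2 + (p.2 1)^2 + c * p.1^2))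
      _ = ∫ p : ℝ × (Fin 2 → ℝ),
            (fun q : ℝ × ℝ × ℝ => Real.sqrt (q.2.1^2 + q.2.2^2 + c * q.1^2))
              ((Prod.map (id : ℝ → ℝ) (MeasurableEquiv.piFinTwo (fun _ : Fin 2 => ℝ))) p)
            ∂((gaussianReal 0 1).prod (Measure.pi fun _ : Fin 2 => gaussianReal 0 1)) := by
          congr 1
      _ = ∫ q : ℝ × ℝ × ℝ, Real.sqrt (q.2.1^2 + q.2.2^2 + c*q.1^2)
            ∂((gaussianReal 0 1).prod ((gaussianReal 0 1).prod (gaussianReal 0 1))) :=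
          by exact h2.integral_comp emb2 (fun q : ℝ × ℝ × ℝ => Real.sqrt (q.2.1^2 + q.2.2^2 + c * q.1^2))
  rw [step1]
  have hfq : Integrable (fun q : ℝ × ℝ × ℝ => Real.sqrt (q.2.1^2 + q.2.2^2 + c*q.1^2))
      ((gaussianReal 0 1).prod ((gaussianReal 0 1).prod (gaussianReal 0 1))) := by
    have hD : Integrable (fun q : ℝ × ℝ × ℝ =>
        |q.1| * 1 + ((1:ℝ) * (|q.2.1| * 1) + (1:ℝ) * ((1:ℝ) * |q.2.2|)))
        ((gaussianReal 0 1).prod ((gaussianReal 0 1).prod (gaussianReal 0 1))) :=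
      (gauss_abs_integrable.mul_prod (integrable_const 1)).add
        (((integrable_const 1).mul_prod (gauss_abs_integrable.mul_prod (integrable_const 1))).add
          ((integrable_const 1).mul_prod ((integrable_const 1).mul_prod gauss_abs_integrable)))
    refine hD.mono' ?_ ?_
    · exact (Real.continuous_sqrt.comp (by fun_prop)).aestronglyMeasurable
    filter_upwards with q
    rw [Real.norm_eq_abs, abs_of_nonneg (Real.sqrt_nonneg _)]
    simp only [mul_one, one_mul]
    rw [show |q.1| + (|q.2.1| + |q.2.2|)
        = Real.sqrt ((|q.1| + (|q.2.1| + |q.2.2|))^2) from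
      (Real.sqrt_sq (by positivity)).symm]
    apply Real.sqrt_le_sqrt
    nlinarith [sq_abs q.1, sq_abs q.2.1, sq_abs q.2.2, abs_nonneg q.1, abs_nonneg q.2.1,
      abs_nonneg q.2.2, mul_nonneg (abs_nonneg q.1) (abs_nonneg q.2.1),
      mul_nonneg (abs_nonneg q.1) (abs_nonneg q.2.2),
      mul_nonneg (abs_nonneg q.2.1) (abs_nonneg q.2.2), sq_nonneg q.1]
  rw [integral_prod _ hfq]
  simp only [plane_gauss hc0 hc1]
  rw [gauss_integral]
  have hpull : ∀ z : ℝ, pdf1 z *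
      (∫ r in Set.Ioi (0:ℝ), r * Real.exp (-r^2/2) * Real.sqrt (r^2 + c*z^2))
      = (Real.sqrt (2*Real.pi))⁻¹ * (Real.exp (-z^2/2) *
          (∫ r in Set.Ioi (0:ℝ), r * Real.exp (-r^2/2) * Real.sqrt (r^2 + c*z^2))) := by
    intro z; unfold pdf1; ring
  simp only [hpull]
  rw [integral_const_mul]
  rw [outer hc0 hc1]
  have hsq : Real.sqrt (2/Real.pi) = 2 / Real.sqrt (2*Real.pi) := by
    rw [show (2/Real.pi : ℝ) = 2^2 / (2*Real.pi) from by
      rw [div_eq_div_iff (by positivity) (by positivity)]; ring]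
    rw [Real.sqrt_div (by positivity), Real.sqrt_sq (by norm_num)]
  have hcc : Real.sqrt c = 1/Real.sqrt a := by
    rw [hc, one_div, one_div, Real.sqrt_inv]
  rw [hcc, hsq]
  ring

-- #print axioms check
end
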